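/- Let A₁, ..., A_r be finite abelian groups, and for each i write A_i = ∏_{j=1}^{l_i} C_{i,j} as a product of cyclic invariant factors with |C_{i,j}| dividing |C_{i,j+1}|. Then the descending iterated standard wreath product of the cyclic groups C_{i,j} taken in lexicographic order (C_{1,1}, C_{1,2}, ..., C_{1,l₁}, C_{2,1}, ..., C_{r,l_r}) admits a surjective homomorphism onto A₁ ≀ (A₂ ≀ (··· ≀ A_r)···). -/

import Mathlib

/-- The automorphism action of `G` on `G → H` by right translation:
`(wrAut H G g) f x = f (x * g)`, so that the semidirect product below has
multiplication `(f₁, g₁)(f₂, g₂) = (f₁ · f₂^{g₁⁻¹}, g₁g₂)` with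
`f₂^{g₁⁻¹}(x) = f₂ (x * g₁)`. -/
def wrAut (H G : Type*) [Group H] [Group G] : G →* MulAut (G → H) where
  toFun g :=
    { toFun := fun f x => f (x * g)
      invFun := fun f x => f (x * g⁻¹)
      left_inv := fun f => funext fun x => by simp [mul_assoc]
      right_inv := fun f => funext fun x => by simp [mul_assoc]
      map_mul' := fun f₁ f₂ => rfl }
  map_one' := MulEquiv.ext fun f => funext fun x => by simp
  map_mul' := fun g₁ g₂ => MulEquiv.ext fun f => funext fun x => by simp [mul_assoc]

/-- The standard (regular) wreath product `H ≀ G`. -/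
abbrev Wr (H G : Type*) [Group H] [Group G] := SemidirectProduct (G → H) G (wrAut H G)

/-- The standard wreath product of bundled groups. -/
def WrGrp (H G : GrpCat.{u}) : GrpCat.{u} := GrpCat.of (Wr H G)

/-- Descending iterated standard wreath product `C₁ ≀ (C₂ ≀ (⋯ ≀ C_r)⋯)`,
given by a head group and the list of remaining groups. -/
def descW : GrpCat.{u} → List GrpCat.{u} → GrpCat.{u}
  | G, [] => G
  | G, H :: t => WrGrp G (descW H t)

/-- Ascending iterated standard wreath product `(⋯(C₁ ≀ C₂) ≀ ⋯) ≀ C_r`,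
given by a head group and the list of remaining groups. -/
def ascW : GrpCat.{u} → List GrpCat.{u} → GrpCat.{u}
  | G, [] => G
  | G, H :: t => ascW (WrGrp G H) t

/-- The direct product of a list of bundled groups. -/
def listProd : List GrpCat.{u} → GrpCat.{u}
  | [] => GrpCat.of PUnit
  | G :: t => GrpCat.of (G × listProd t)

section PushAux

variable {H G₁ G₂ : Type*}

noncomputable def push [CommMonoid H] [Fintype G₁] (φ : G₁ → G₂) (f : G₁ → H) (y : G₂) : H :=
  letI := Classical.decEq G₂
  ∏ x : G₁, if φ x = y then f x else 1

theorem push_mul [CommMonoid H] [Fintype G₁] (φ : G₁ → G₂) (f₁ f₂ : G₁ → H) (y : G₂) :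
    push φ (fun x => f₁ x * f₂ x) y = push φ f₁ y * push φ f₂ y := by
  classical
  simp only [push]
  rw [← Finset.prod_mul_distrib]
  exact Finset.prod_congr rfl fun x _ => by split <;> simp

theorem push_one [CommMonoid H] [Fintype G₁] (φ : G₁ → G₂) (y : G₂) :
    push φ (fun _ => (1 : H)) y = 1 := by
  classical
  simp [push]

theorem push_comp [CommMonoid H] [Group G₁] [Group G₂] [Fintype G₁] (φ : G₁ →* G₂)
    (f : G₁ → H) (g : G₁) (y : G₂) :
    push (⇑φ) (fun x => f (x * g)) y = push (⇑φ) f (y * φ g) := by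
  classical
  simp only [push]
  rw [← Equiv.prod_comp (Equiv.mulRight g) (fun x => if φ x = y * φ g then f x else 1)]
  refine Finset.prod_congr rfl fun x _ => ?_
  simp [mul_left_inj]

theorem push_section [CommMonoid H] [Fintype G₁] [DecidableEq G₁] (φ : G₁ → G₂) (hφ : Function.Surjective φ)
    (f : G₂ → H) (y : G₂) :
    push φ (fun x => if x = Function.surjInv hφ (φ x) then f (φ x) else 1) y = f y := by
  classical
  simp only [push]
  have key : ∀ x : G₁,
      (if φ x = y then (if x = Function.surjInv hφ (φ x) then f (φ x) else 1) else 1)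
        = if x = Function.surjInv hφ y then f y else 1 := by
    intro x
    by_cases h1 : φ x = y
    · subst h1; simp
    · rw [if_neg h1, if_neg]
      intro h2
      rw [h2] at h1
      exact h1 (Function.surjInv_eq hφ y)
  rw [Finset.prod_congr rfl fun x _ => key x]
  simp [Finset.prod_ite_eq', Function.surjInv_eq hφ y]

end PushAux

theorem sdp_ext {N G : Type*} [Group N] [Group G] {φ : G →* MulAut N}
    {x y : SemidirectProduct N G φ} (hl : x.left = y.left) (hr : x.right = y.right) : x = y := by
  cases x; cases y; cases hl; cases hr; rfl

section WrHoms

noncomputable def wrPush {H G₁ G₂ : Type*} [Group H] [Group G₁] [Group G₂] [Finite G₁]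
    (hc : ∀ a b : H, a * b = b * a) (φ : G₁ →* G₂) : Wr H G₁ →* Wr H G₂ :=
  letI : Fintype G₁ := Fintype.ofFinite _
  letI : CommMonoid H := { (inferInstance : Monoid H) with mul_comm := hc }
  { toFun := fun w => ⟨push (⇑φ) w.left, φ w.right⟩
    map_one' := by
      refine sdp_ext ?_ (by simp)
      funext y
      exact push_one (⇑φ) y
    map_mul' := fun w₁ w₂ => by
      refine sdp_ext ?_ (by simp)
      funext y
      show push (⇑φ) (fun x => w₁.left x * w₂.left (x * w₁.right)) y
          = push (⇑φ) w₁.left y * push (⇑φ) w₂.left (y * φ w₁.right)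
      rw [push_mul (⇑φ) w₁.left (fun x => w₂.left (x * w₁.right)) y,
        push_comp φ w₂.left w₁.right y] }

theorem wrPush_surjective {H G₁ G₂ : Type*} [Group H] [Group G₁] [Group G₂] [Finite G₁]
    (hc : ∀ a b : H, a * b = b * a) (φ : G₁ →* G₂) (hφ : Function.Surjective (⇑φ)) :
    Function.Surjective (wrPush hc φ) := by
  letI : Fintype G₁ := Fintype.ofFinite _
  letI : CommMonoid H := { (inferInstance : Monoid H) with mul_comm := hc }
  letI : DecidableEq G₁ := Classical.decEq _
  rintro ⟨f, g⟩
  obtain ⟨g₁, rfl⟩ := hφ g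
  refine ⟨⟨fun x => if x = Function.surjInv hφ (φ x) then f (φ x) else 1, g₁⟩, ?_⟩
  refine sdp_ext ?_ rfl
  funext y
  exact push_section (⇑φ) hφ f y

def wrMapLeft {H₁ H₂ G : Type*} [Group H₁] [Group H₂] [Group G] (φ : H₁ →* H₂) :
    Wr H₁ G →* Wr H₂ G where
  toFun w := ⟨fun x => φ (w.left x), w.right⟩
  map_one' := by
    refine sdp_ext ?_ rfl
    funext x
    show φ 1 = 1
    simp
  map_mul' w₁ w₂ := by
    refine sdp_ext ?_ rfl
    funext x
    show φ (w₁.left x * w₂.left (x * w₁.right)) = φ (w₁.left x) * φ (w₂.left (x * w₁.right))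
    simp

theorem wrMapLeft_surjective {H₁ H₂ G : Type*} [Group H₁] [Group H₂] [Group G] (φ : H₁ →* H₂)
    (hφ : Function.Surjective (⇑φ)) : Function.Surjective (wrMapLeft (G := G) φ) := by
  rintro ⟨f, g⟩
  refine ⟨⟨fun x => Function.surjInv hφ (f x), g⟩, ?_⟩
  refine sdp_ext ?_ rfl
  funext x
  exact Function.surjInv_eq hφ (f x)

def pairWr {W C A G : Type*} [Group W] [Group C] [Group A] [Group G]
    (α : W →* Wr C G) (β : W →* Wr A G) (h : ∀ w, (α w).right = (β w).right) :
    W →* Wr (C × A) G where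
  toFun w := ⟨fun x => ((α w).left x, (β w).left x), (α w).right⟩
  map_one' := by
    refine sdp_ext ?_ (by simp)
    funext x
    simp
  map_mul' w₁ w₂ := by
    refine sdp_ext ?_ (by simp)
    funext x
    show ((α (w₁ * w₂)).left x, (β (w₁ * w₂)).left x)
        = (((α w₁).left x, (β w₁).left x)) * (((α w₂).left (x * (α w₁).right),
            (β w₂).left (x * (α w₁).right)))
    rw [map_mul α, map_mul β]
    refine Prod.ext ?_ ?_
    · rfl
    · show (β w₁).left x * (β w₂).left (x * (β w₁).right) = _
      rw [h w₁]
      rfl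

end WrHoms

section KeyEpi

theorem finite_wr {H G : Type*} [Group H] [Group G] (h1 : Finite H) (h2 : Finite G) :
    Finite (Wr H G) :=
  Finite.of_surjective (fun p : (G → H) × G => (⟨p.1, p.2⟩ : Wr H G)) fun w => ⟨(w.left, w.right), rfl⟩

theorem keyEpi {C A G : Type*} [Group C] [Group A] [Group G] (hA : Finite A) (hG : Finite G)
    (hc : ∀ a b : C, a * b = b * a) :
    ∃ π : Wr C (Wr A G) →* Wr (C × A) G, Function.Surjective π := by
  haveI : Finite (Wr A G) := finite_wr hA hG
  letI : Fintype (Wr A G) := Fintype.ofFinite _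
  letI : CommMonoid C := { (inferInstance : Monoid C) with mul_comm := hc }
  letI : DecidableEq (Wr A G) := Classical.decEq _
  have hrs : Function.Surjective (⇑(SemidirectProduct.rightHom : Wr A G →* G)) :=
    SemidirectProduct.rightHom_surjective
  set α := wrPush hc (SemidirectProduct.rightHom : Wr A G →* G) with hα
  set β := (SemidirectProduct.rightHom : Wr C (Wr A G) →* Wr A G) with hβ
  have hcompat : ∀ w : Wr C (Wr A G), (α w).right = (β w).right := fun w => rfl
  refine ⟨pairWr α β hcompat, ?_⟩
  rintro ⟨fp, g⟩
  set s := Function.surjInv hrs with hs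
  refine ⟨⟨fun u => if u = s (SemidirectProduct.rightHom u) then (fp (SemidirectProduct.rightHom u)).1 else 1,
      ⟨fun x => (fp x).2, g⟩⟩, ?_⟩
  refine sdp_ext ?_ rfl
  funext x
  refine Prod.ext ?_ rfl
  show push (⇑(SemidirectProduct.rightHom : Wr A G →* G))
      (fun u => if u = s (SemidirectProduct.rightHom u) then (fp (SemidirectProduct.rightHom u)).1 else 1) x
      = (fp x).1
  exact push_section _ hrs (fun y => (fp y).1) x

noncomputable def wrToProd {C D : Type*} [Group C] [Group D] [Finite D]
    (hc : ∀ a b : C, a * b = b * a) : Wr C D →* C × D :=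
  letI : Fintype D := Fintype.ofFinite _
  letI : CommMonoid C := { (inferInstance : Monoid C) with mul_comm := hc }
  { toFun := fun w => (∏ x : D, w.left x, w.right)
    map_one' := by
      refine Prod.ext ?_ rfl
      show (∏ x : D, (1 : C)) = 1
      simp
    map_mul' := fun w₁ w₂ => by
      refine Prod.ext ?_ rfl
      show (∏ x : D, (w₁.left x * w₂.left (x * w₁.right))) = (∏ x : D, w₁.left x) * ∏ x : D, w₂.left x
      rw [Finset.prod_mul_distrib]
      congr 1
      exact Equiv.prod_comp (Equiv.mulRight w₁.right) w₂.left }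

theorem wrToProd_surjective {C D : Type*} [Group C] [Group D] [Finite D]
    (hc : ∀ a b : C, a * b = b * a) : Function.Surjective (wrToProd (D := D) hc) := by
  letI : Fintype D := Fintype.ofFinite _
  letI : CommMonoid C := { (inferInstance : Monoid C) with mul_comm := hc }
  letI : DecidableEq D := Classical.decEq _
  rintro ⟨c, d⟩
  refine ⟨⟨fun x => if x = 1 then c else 1, d⟩, ?_⟩
  refine Prod.ext ?_ rfl
  show (∏ x : D, if x = 1 then c else 1) = c
  simp [Finset.prod_ite_eq']

end KeyEpi

universe u

section GrpLevel

theorem finite_descW : ∀ (L : List GrpCat.{u}) (C : GrpCat.{u}), Finite C → (∀ H ∈ L, Finite H) →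
    Finite (descW C L)
  | [], _, hC, _ => hC
  | H :: t, C, hC, hL =>
    finite_wr hC (finite_descW t H (hL H (List.mem_cons_self))
      fun K hK => hL K (List.mem_cons_of_mem _ hK))

theorem finite_descW_append : ∀ (L : List GrpCat.{u}) (A B : GrpCat.{u}) (L₂ : List GrpCat.{u}),
    Finite A → (∀ H ∈ L, Finite H) → Finite (descW B L₂) →
    Finite (descW A (L ++ B :: L₂))
  | [], _, _, _, hA, _, hfin => finite_wr hA hfin
  | H :: t, A, B, L₂, hA, hL, hfin =>
    finite_wr hA (finite_descW_append t H B L₂ (hL H (List.mem_cons_self))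
      (fun K hK => hL K (List.mem_cons_of_mem _ hK)) hfin)

instance : Subsingleton (listProd ([] : List GrpCat.{u})) :=
  inferInstanceAs (Subsingleton PUnit.{u+1})

theorem finite_listProd : ∀ (L : List GrpCat.{u}), (∀ H ∈ L, Finite H) → Finite (listProd L)
  | [], _ => inferInstanceAs (Finite PUnit.{u+1})
  | H :: t, hL => by
    haveI h1 : Finite H := hL H (List.mem_cons_self)
    haveI h2 : Finite (listProd t) := finite_listProd t fun K hK => hL K (List.mem_cons_of_mem _ hK)
    exact inferInstanceAs (Finite (H × listProd t))

theorem comm_listProd : ∀ (L : List GrpCat.{u}), (∀ H ∈ L, ∀ a b : H, a * b = b * a) →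
    ∀ a b : listProd L, a * b = b * a
  | [], _, a, b => Subsingleton.elim _ _
  | H :: t, hL, a, b => by
    have h1 := hL H (List.mem_cons_self)
    have h2 := comm_listProd t fun K hK => hL K (List.mem_cons_of_mem _ hK)
    exact Prod.ext (h1 a.1 b.1) (h2 a.2 b.2)

theorem claim0 : ∀ (L : List GrpCat.{u}) (C : GrpCat.{u}),
    (∀ a b : C, a * b = b * a) →
    (∀ H ∈ L, Finite H ∧ ∀ a b : H, a * b = b * a) →
    ∃ π : descW C L →* listProd (C :: L), Function.Surjective π
  | [], C, _, _ => by
    refine ⟨(MonoidHom.id C).prod 1, ?_⟩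
    rintro ⟨c, u⟩
    exact ⟨c, Prod.ext rfl (Subsingleton.elim _ _)⟩
  | A :: t, C, hC, hL => by
    obtain ⟨π', hπ'⟩ := claim0 t A (hL A (List.mem_cons_self)).2
      fun K hK => hL K (List.mem_cons_of_mem _ hK)
    haveI hfin : Finite (descW A t) := finite_descW t A (hL A (List.mem_cons_self)).1
      fun K hK => (hL K (List.mem_cons_of_mem _ hK)).1
    refine ⟨((MonoidHom.id C).prodMap π').comp (wrToProd (D := descW A t) hC), ?_⟩
    exact (Function.surjective_id.prodMap hπ').comp (wrToProd_surjective hC)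

theorem claim1 : ∀ (L : List GrpCat.{u}) (C B : GrpCat.{u}) (L₂ : List GrpCat.{u}),
    (∀ a b : C, a * b = b * a) →
    (∀ H ∈ L, Finite H ∧ ∀ a b : H, a * b = b * a) →
    Finite (descW B L₂) →
    ∃ π : descW C (L ++ B :: L₂) →* Wr (listProd (C :: L)) (descW B L₂),
      Function.Surjective π
  | [], C, B, L₂, _, _, hfin => by
    refine ⟨wrMapLeft ((MonoidHom.id C).prod 1), ?_⟩
    exact wrMapLeft_surjective _ fun p => ⟨p.1, Prod.ext rfl (Subsingleton.elim _ _)⟩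
  | A :: L', C, B, L₂, hC, hL, hfin => by
    obtain ⟨π', hπ'⟩ := claim1 L' A B L₂ (hL A (List.mem_cons_self)).2
      (fun K hK => hL K (List.mem_cons_of_mem _ hK)) hfin
    haveI hfinA : Finite (descW A (L' ++ B :: L₂)) :=
      finite_descW_append L' A B L₂ (hL A (List.mem_cons_self)).1
        (fun K hK => (hL K (List.mem_cons_of_mem _ hK)).1) hfin
    haveI hfinP : Finite (listProd (A :: L')) :=
      finite_listProd (A :: L') fun K hK => (hL K hK).1
    obtain ⟨π₂, hπ₂⟩ := keyEpi (C := C) (A := listProd (A :: L')) (G := descW B L₂)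
      hfinP hfin hC
    exact ⟨π₂.comp (wrPush hC π'), hπ₂.comp (wrPush_surjective hC π' hπ')⟩

theorem claim2 : ∀ (M : List (GrpCat.{u} × List GrpCat.{u})) (P : GrpCat.{u} × List GrpCat.{u}),
    (∀ Q ∈ P :: M, ∀ H ∈ Q.1 :: Q.2, Finite H ∧ ∀ a b : H, a * b = b * a) →
    ∃ π : descW P.1 (P.2 ++ M.flatMap fun Q => Q.1 :: Q.2) →*
        descW (listProd (P.1 :: P.2)) (M.map fun Q => listProd (Q.1 :: Q.2)),
      Function.Surjective π
  | [], P, h => by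
    have e : (P.2 ++ ([] : List (GrpCat.{u} × List GrpCat.{u})).flatMap fun Q => Q.1 :: Q.2) = P.2 := by
      simp
    rw [e]
    exact claim0 P.2 P.1
      (h P (List.mem_cons_self) P.1 (List.mem_cons_self)).2
      fun K hK => h P (List.mem_cons_self) K (List.mem_cons_of_mem _ hK)
  | Q :: M', P, h => by
    obtain ⟨π₀, hπ₀⟩ := claim2 M' Q fun R hR => h R (by
      rcases List.mem_cons.mp hR with hR | hR
      · subst hR
        exact List.mem_cons_of_mem _ (List.mem_cons_self)
      · exact List.mem_cons_of_mem _ (List.mem_cons_of_mem _ hR))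
    have hflat : ∀ K : GrpCat.{u}, K ∈ (M'.flatMap fun R => R.1 :: R.2) → Finite K := by
      intro K hK
      obtain ⟨R, hR, hKR⟩ := List.mem_flatMap.mp hK
      exact (h R (List.mem_cons_of_mem _ (List.mem_cons_of_mem _ hR)) K hKR).1
    haveI hfin : Finite (descW Q.1 (Q.2 ++ M'.flatMap fun R => R.1 :: R.2)) := by
      apply finite_descW
      · exact (h Q (List.mem_cons_of_mem _ (List.mem_cons_self)) Q.1
          (List.mem_cons_self)).1
      · intro K hK
        rcases List.mem_append.mp hK with hK | hK
        · exact (h Q (List.mem_cons_of_mem _ (List.mem_cons_self)) K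
            (List.mem_cons_of_mem _ hK)).1
        · exact hflat K hK
    obtain ⟨π₁, hπ₁⟩ := claim1 P.2 P.1 Q.1 (Q.2 ++ M'.flatMap fun R => R.1 :: R.2)
      (h P (List.mem_cons_self) P.1 (List.mem_cons_self)).2
      (fun K hK => h P (List.mem_cons_self) K (List.mem_cons_of_mem _ hK)) hfin
    have hcommP : ∀ a b : listProd (P.1 :: P.2), a * b = b * a :=
      comm_listProd _ fun K hK => (h P (List.mem_cons_self) K hK).2
    refine ⟨(wrPush hcommP π₀).comp π₁, ?_⟩
    exact (wrPush_surjective hcommP π₀ hπ₀).comp hπ₁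

end GrpLevel

/-- Let `A₁, …, A_r` be finite abelian groups, each given by its
invariant factor decomposition `A_i = C_{i,1} × ⋯ × C_{i,l_i}` with
`|C_{i,j}| ∣ |C_{i,j+1}|` (each `A_i` is encoded as a pair `Q = (C_{i,1}, [C_{i,2}, …])`
of a head cyclic group and the list of remaining invariant factors, and the family
as the head pair `P` and the list `M` of remaining pairs). Then the descending
iterated standard wreath product of all the `C_{i,j}` in lexicographic order maps
onto `A₁ ≀ (A₂ ≀ (⋯ ≀ A_r)⋯)`. -/
theorem stmt16 (P : GrpCat.{u} × List GrpCat.{u}) (M : List (GrpCat.{u} × List GrpCat.{u}))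
    (hcyc : ∀ Q ∈ P :: M, ∀ H ∈ Q.1 :: Q.2, Finite H ∧ IsCyclic H)
    (hdvd : ∀ Q ∈ P :: M,
      List.Chain (fun H K : GrpCat.{u} => Nat.card H ∣ Nat.card K) Q.1 Q.2) :
    ∃ π : descW P.1 (P.2 ++ M.flatMap fun Q => Q.1 :: Q.2) →*
        descW (listProd (P.1 :: P.2)) (M.map fun Q => listProd (Q.1 :: Q.2)),
      Function.Surjective π := by
  refine claim2 M P fun Q hQ H hH => ⟨(hcyc Q hQ H hH).1, ?_⟩
  haveI := (hcyc Q hQ H hH).2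
  exact fun a b => (IsCyclic.commGroup (α := H)).mul_comm a b
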